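/- arXiv:2105.12516 — 3 statements merged into one kernel-verified Lean document; each statement's English description precedes it below -/
import Mathlib

section
/- Let n, m be positive integers, let K be an n×n real symmetric positive-definite matrix, let R be an invertible n×n real matrix with R Rᵀ = K, let Φ be an m×n real matrix, let y ∈ ℝᵐ, and let λ > 0. Define the regularized least-squares estimate g^Reg := (ΦᵀΦ + λK⁻¹)⁻¹ Φᵀ y. Assume g^Reg ≠ 0 and Φ g^Reg ≠ y. Then there exists ρ > 0 such that g^Reg is a global minimizer of the robust least-squares objective g ↦ sup{ ‖(Φ + Δ)g − y‖ : Δ ∈ ℝ^{m×n}, ‖ΔR‖_F ≤ ρ }, i.e., for every g ∈ ℝⁿ, sup over {Δ : ‖ΔR‖_F ≤ ρ} of ‖(Φ + Δ)g^Reg − y‖ is at most the sup over {Δ : ‖ΔR‖_F ≤ ρ} of ‖(Φ + Δ)g − y‖. -/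
open Matrix
open scoped BigOperators

/-- Euclidean norm of a real vector. -/
noncomputable def euclNorm {k : ℕ} (v : Fin k → ℝ) : ℝ :=
  Real.sqrt (∑ i, (v i) ^ 2)

/-- Frobenius norm of a real matrix. -/
noncomputable def frobNorm {m n : ℕ} (A : Matrix (Fin m) (Fin n) ℝ) : ℝ :=
  Real.sqrt (∑ i, ∑ j, (A i j) ^ 2)

lemma euclNorm_nonneg {k : ℕ} (v : Fin k → ℝ) : 0 ≤ euclNorm v := Real.sqrt_nonneg _

lemma euclNorm_sq {k : ℕ} (v : Fin k → ℝ) : euclNorm v ^ 2 = ∑ i, (v i) ^ 2 :=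
  Real.sq_sqrt (by positivity)

lemma euclNorm_pos {k : ℕ} {v : Fin k → ℝ} (hv : v ≠ 0) : 0 < euclNorm v := by
  rw [euclNorm, Real.sqrt_pos]
  obtain ⟨i, hi⟩ : ∃ i, v i ≠ 0 := by
    by_contra h; push_neg at h; exact hv (funext h)
  exact Finset.sum_pos' (fun j _ => sq_nonneg _) ⟨i, Finset.mem_univ i, by positivity⟩

lemma dot_le_norms {k : ℕ} (v w : Fin k → ℝ) : v ⬝ᵥ w ≤ euclNorm v * euclNorm w := by
  calc v ⬝ᵥ w ≤ |v ⬝ᵥ w| := le_abs_self _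
    _ = Real.sqrt ((v ⬝ᵥ w) ^ 2) := (Real.sqrt_sq_eq_abs _).symm
    _ ≤ Real.sqrt ((∑ i, v i ^ 2) * (∑ i, w i ^ 2)) := by
        apply Real.sqrt_le_sqrt
        simpa [dotProduct] using Finset.sum_mul_sq_le_sq_mul_sq Finset.univ v w
    _ = euclNorm v * euclNorm w := Real.sqrt_mul (by positivity) _

lemma euclNorm_dot_self {k : ℕ} (v : Fin k → ℝ) : v ⬝ᵥ v = euclNorm v ^ 2 := by
  rw [euclNorm_sq]; simp [dotProduct, sq]

lemma euclNorm_add_le {k : ℕ} (a b : Fin k → ℝ) :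
    euclNorm (a + b) ≤ euclNorm a + euclNorm b := by
  have hsq : euclNorm (a + b) ^ 2 ≤ (euclNorm a + euclNorm b) ^ 2 := by
    have hab := dot_le_norms a b
    have : euclNorm (a+b) ^2 = euclNorm a ^2 + 2 * (a ⬝ᵥ b) + euclNorm b ^2 := by
      rw [euclNorm_sq, euclNorm_sq, euclNorm_sq]
      simp only [dotProduct, Finset.mul_sum, ← Finset.sum_add_distrib, Pi.add_apply]
      apply Finset.sum_congr rfl; intros; ring
    nlinarith [euclNorm_nonneg a, euclNorm_nonneg b, this]
  calc euclNorm (a+b) = Real.sqrt (euclNorm (a+b) ^ 2) := (Real.sqrt_sq (euclNorm_nonneg _)).symm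
    _ ≤ Real.sqrt ((euclNorm a + euclNorm b)^2) := Real.sqrt_le_sqrt hsq
    _ = euclNorm a + euclNorm b := Real.sqrt_sq (add_nonneg (euclNorm_nonneg a) (euclNorm_nonneg b))

lemma euclNorm_mulVec_le {m n : ℕ} (A : Matrix (Fin m) (Fin n) ℝ) (x : Fin n → ℝ) :
    euclNorm (A *ᵥ x) ≤ frobNorm A * euclNorm x := by
  have key : ∀ i, (A *ᵥ x) i ^ 2 ≤ (∑ j, A i j ^2) * (∑ j, x j ^2) := fun i => by
    simpa [mulVec, dotProduct] using Finset.sum_mul_sq_le_sq_mul_sq Finset.univ (A i) x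
  calc euclNorm (A *ᵥ x) ≤ Real.sqrt ((∑ i, ∑ j, A i j ^2) * (∑ j, x j ^2)) := by
        apply Real.sqrt_le_sqrt
        rw [Finset.sum_mul]
        exact Finset.sum_le_sum fun i _ => key i
    _ = frobNorm A * euclNorm x := Real.sqrt_mul (by positivity) _

lemma euclNorm_smul {k : ℕ} (c : ℝ) (v : Fin k → ℝ) : euclNorm (c • v) = |c| * euclNorm v := by
  simp only [euclNorm, Pi.smul_apply, smul_eq_mul, mul_pow, ← Finset.mul_sum]
  rw [Real.sqrt_mul (sq_nonneg c), Real.sqrt_sq_eq_abs]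

lemma mulVec_dot {m n : ℕ} (A : Matrix (Fin m) (Fin n) ℝ) (x : Fin n → ℝ) (v : Fin m → ℝ) :
    (A *ᵥ x) ⬝ᵥ v = x ⬝ᵥ (Aᵀ *ᵥ v) := by
  simp [dotProduct, mulVec, Finset.sum_mul, Finset.mul_sum]
  rw [Finset.sum_comm]
  apply Finset.sum_congr rfl; intros; apply Finset.sum_congr rfl; intros; ring

lemma vecMulVec_mulVec' {m n : ℕ} (u : Fin m → ℝ) (w t : Fin n → ℝ) :
    vecMulVec u w *ᵥ t = (w ⬝ᵥ t) • u := by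
  ext i
  simp [vecMulVec_apply, mulVec, dotProduct, Finset.mul_sum, Finset.sum_mul,
    mul_comm, mul_assoc, mul_left_comm]

lemma frobNorm_smul_vecMulVec {m n : ℕ} (c : ℝ) (u : Fin m → ℝ) (w : Fin n → ℝ) :
    frobNorm (c • vecMulVec u w) = |c| * (euclNorm u * euclNorm w) := by
  have h : ∑ i, ∑ j, ((c • vecMulVec u w) i j)^2
      = c^2 * ((∑ i, u i ^2) * (∑ j, w j ^2)) := by
    rw [Finset.sum_mul_sum, Finset.mul_sum]
    apply Finset.sum_congr rfl; intro i _
    rw [Finset.mul_sum]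
    apply Finset.sum_congr rfl; intro j _
    simp [vecMulVec_apply]; ring
  rw [frobNorm, h, Real.sqrt_mul (sq_nonneg c), Real.sqrt_mul (by positivity),
    Real.sqrt_sq_eq_abs]
  rfl

/-- Theorem 1: the kernel-based regularized least-squares estimate is a global
minimizer of a robust least-squares objective with kernel-based uncertainty set. -/
theorem regLS_solves_robust_LS
    (n m : ℕ) (hn : 0 < n) (hm : 0 < m)
    (K R : Matrix (Fin n) (Fin n) ℝ) (hK : K.PosDef)
    (hR : IsUnit R.det) (hRK : R * Rᵀ = K)
    (Φ : Matrix (Fin m) (Fin n) ℝ) (y : Fin m → ℝ)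
    (lam : ℝ) (hlam : 0 < lam)
    (gReg : Fin n → ℝ)
    (hgReg : gReg = (Φᵀ * Φ + lam • K⁻¹)⁻¹ *ᵥ (Φᵀ *ᵥ y))
    (hg0 : gReg ≠ 0) (hgy : Φ *ᵥ gReg ≠ y) :
    ∃ ρ : ℝ, 0 < ρ ∧ ∀ g : Fin n → ℝ,
      sSup ((fun Δ => euclNorm ((Φ + Δ) *ᵥ gReg - y)) ''
          {Δ : Matrix (Fin m) (Fin n) ℝ | frobNorm (Δ * R) ≤ ρ}) ≤
        sSup ((fun Δ => euclNorm ((Φ + Δ) *ᵥ g - y)) ''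
          {Δ : Matrix (Fin m) (Fin n) ℝ | frobNorm (Δ * R) ≤ ρ}) := by
  classical
  have hct : Φᴴ = Φᵀ := conjTranspose_eq_transpose_of_trivial Φ
  -- the regularized matrix is positive definite, hence invertible
  have hApd : (Φᵀ * Φ + lam • K⁻¹).PosDef := by
    rw [posDef_iff_dotProduct_mulVec]
    constructor
    · have h1 : (Φᵀ * Φ).IsHermitian := by
        rw [← hct]; exact (posSemidef_conjTranspose_mul_self Φ).1
      have h2 : (lam • K⁻¹).IsHermitian := by
        rw [IsHermitian, conjTranspose_smul, hK.inv.1.eq, star_trivial]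
      exact h1.add h2
    · intro x hx
      rw [add_mulVec, dotProduct_add, smul_mulVec, dotProduct_smul]
      have h1 := (posSemidef_conjTranspose_mul_self Φ).dotProduct_mulVec_nonneg x
      rw [hct] at h1
      have h2 := hK.inv.dotProduct_mulVec_pos hx
      have h3 : (0:ℝ) < lam * (star x ⬝ᵥ K⁻¹ *ᵥ x) := mul_pos hlam h2
      simp only [smul_eq_mul]
      linarith
  have hAdet : IsUnit (Φᵀ * Φ + lam • K⁻¹).det :=
    isUnit_iff_ne_zero.2 (ne_of_gt hApd.det_pos)
  -- normal equations
  have hnormal : (Φᵀ * Φ + lam • K⁻¹) *ᵥ gReg = Φᵀ *ᵥ y := by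
    rw [hgReg, mulVec_mulVec, Matrix.mul_nonsing_inv _ hAdet, one_mulVec]
  set r : Fin m → ℝ := Φ *ᵥ gReg - y with hrdef
  set s : Fin n → ℝ := R⁻¹ *ᵥ gReg with hsdef
  have hr0 : r ≠ 0 := sub_ne_zero.2 hgy
  have hs0 : s ≠ 0 := by
    intro h
    apply hg0
    have h2 := congrArg (fun v => R *ᵥ v) h
    simpa [hsdef, mulVec_mulVec, Matrix.mul_nonsing_inv R hR, one_mulVec] using h2
  have hnr : 0 < euclNorm r := euclNorm_pos hr0
  have hns : 0 < euclNorm s := euclNorm_pos hs0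
  set nr := euclNorm r with hnrdef
  set ns := euclNorm s with hnsdef
  set ρ := lam * ns / nr with hρdef
  have hρpos : 0 < ρ := by positivity
  -- key identity from the normal equations
  have hKinv : K⁻¹ = (R⁻¹)ᵀ * R⁻¹ := by
    rw [← hRK, Matrix.mul_inv_rev, Matrix.transpose_nonsing_inv]
  have key : Φᵀ *ᵥ r + lam • ((R⁻¹)ᵀ *ᵥ s) = 0 := by
    have h1 : (Φᵀ * Φ) *ᵥ gReg + lam • (K⁻¹ *ᵥ gReg) = Φᵀ *ᵥ y := by
      rw [← smul_mulVec, ← add_mulVec]; exact hnormal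
    have h2 : Φᵀ *ᵥ r = (Φᵀ * Φ) *ᵥ gReg - Φᵀ *ᵥ y := by
      rw [hrdef, mulVec_sub, mulVec_mulVec]
    have h3 : K⁻¹ *ᵥ gReg = (R⁻¹)ᵀ *ᵥ s := by
      rw [hKinv, ← mulVec_mulVec, hsdef]
    rw [h2, ← h3, sub_add_eq_add_sub, h1, sub_self]
  -- unit vectors
  set u : Fin m → ℝ := nr⁻¹ • r with hudef
  set w : Fin n → ℝ := ns⁻¹ • s with hwdef
  have hru : r ⬝ᵥ u = nr := by
    rw [hudef, dotProduct_smul, euclNorm_dot_self, ← hnrdef, smul_eq_mul, sq,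
      ← mul_assoc, inv_mul_cancel₀ hnr.ne', one_mul]
  have hsw : s ⬝ᵥ w = ns := by
    rw [hwdef, dotProduct_smul, euclNorm_dot_self, ← hnsdef, smul_eq_mul, sq,
      ← mul_assoc, inv_mul_cancel₀ hns.ne', one_mul]
  have hu1 : u ⬝ᵥ u = 1 := by
    rw [hudef, smul_dotProduct, ← hudef, hru, smul_eq_mul, inv_mul_cancel₀ hnr.ne']
  have hun : euclNorm u = 1 := by
    rw [hudef, euclNorm_smul, abs_of_pos (inv_pos.2 hnr), ← hnrdef,
      inv_mul_cancel₀ hnr.ne']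
  have hwn : euclNorm w = 1 := by
    rw [hwdef, euclNorm_smul, abs_of_pos (inv_pos.2 hns), ← hnsdef,
      inv_mul_cancel₀ hns.ne']
  -- scaled key identity
  have key2 : Φᵀ *ᵥ u + ρ • ((R⁻¹)ᵀ *ᵥ w) = 0 := by
    have hc : ρ * ns⁻¹ = nr⁻¹ * lam := by
      rw [hρdef]; field_simp
    calc Φᵀ *ᵥ u + ρ • ((R⁻¹)ᵀ *ᵥ w)
        = nr⁻¹ • (Φᵀ *ᵥ r) + (ρ * ns⁻¹) • ((R⁻¹)ᵀ *ᵥ s) := by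
          rw [hudef, hwdef, mulVec_smul, mulVec_smul, smul_smul]
      _ = nr⁻¹ • (Φᵀ *ᵥ r) + (nr⁻¹ * lam) • ((R⁻¹)ᵀ *ᵥ s) := by rw [hc]
      _ = nr⁻¹ • (Φᵀ *ᵥ r + lam • ((R⁻¹)ᵀ *ᵥ s)) := by rw [smul_add, smul_smul]
      _ = 0 := by rw [key, smul_zero]
  -- the optimal value
  have hyu : -(y ⬝ᵥ u) = nr + ρ * ns := by
    have hr' : r ⬝ᵥ u = gReg ⬝ᵥ (Φᵀ *ᵥ u) - y ⬝ᵥ u := by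
      rw [hrdef, sub_dotProduct, mulVec_dot]
    have hs' : s ⬝ᵥ w = gReg ⬝ᵥ ((R⁻¹)ᵀ *ᵥ w) := by
      rw [hsdef, mulVec_dot]
    have h0 : gReg ⬝ᵥ (Φᵀ *ᵥ u + ρ • ((R⁻¹)ᵀ *ᵥ w)) = 0 := by
      rw [key2, dotProduct_zero]
    rw [dotProduct_add, dotProduct_smul, smul_eq_mul] at h0
    have h1 := hru
    have h2 := hsw
    rw [hr'] at h1
    rw [hs'] at h2
    nlinarith [h0, h1, h2]
  -- the worst-case perturbation
  set Δ₀ : Matrix (Fin m) (Fin n) ℝ := ρ • (vecMulVec u w * R⁻¹) with hΔ₀def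
  have hΔ₀R : Δ₀ * R = ρ • vecMulVec u w := by
    rw [hΔ₀def, Matrix.smul_mul, Matrix.mul_assoc, Matrix.nonsing_inv_mul R hR, Matrix.mul_one]
  have hΔ₀frob : frobNorm (Δ₀ * R) = ρ := by
    rw [hΔ₀R, frobNorm_smul_vecMulVec, hun, hwn, abs_of_pos hρpos]
    ring
  -- lower bound for every g at Δ₀
  have hlow : ∀ g : Fin n → ℝ, nr + ρ * ns ≤ euclNorm ((Φ + Δ₀) *ᵥ g - y) := by
    intro g
    have hDg : Δ₀ *ᵥ g = (ρ * (w ⬝ᵥ (R⁻¹ *ᵥ g))) • u := by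
      rw [hΔ₀def, smul_mulVec, ← mulVec_mulVec, vecMulVec_mulVec', smul_smul]
    have hdot : ((Φ + Δ₀) *ᵥ g - y) ⬝ᵥ u = nr + ρ * ns := by
      rw [sub_dotProduct, add_mulVec, add_dotProduct, hDg, smul_dotProduct, hu1,
        smul_eq_mul, mul_one, mulVec_dot]
      have hwt : w ⬝ᵥ (R⁻¹ *ᵥ g) = g ⬝ᵥ ((R⁻¹)ᵀ *ᵥ w) := by
        rw [dotProduct_comm, mulVec_dot]
      rw [hwt]
      have hcomb : g ⬝ᵥ (Φᵀ *ᵥ u) + ρ * (g ⬝ᵥ ((R⁻¹)ᵀ *ᵥ w))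
          = g ⬝ᵥ (Φᵀ *ᵥ u + ρ • ((R⁻¹)ᵀ *ᵥ w)) := by
        rw [dotProduct_add, dotProduct_smul, smul_eq_mul]
      rw [hcomb, key2, dotProduct_zero, zero_sub, hyu]
    calc nr + ρ * ns = ((Φ + Δ₀) *ᵥ g - y) ⬝ᵥ u := hdot.symm
      _ ≤ euclNorm ((Φ + Δ₀) *ᵥ g - y) * euclNorm u := dot_le_norms _ _
      _ = euclNorm ((Φ + Δ₀) *ᵥ g - y) := by rw [hun, mul_one]
  -- upper bound over the uncertainty set
  have hup : ∀ (g : Fin n → ℝ) (Δ : Matrix (Fin m) (Fin n) ℝ), frobNorm (Δ * R) ≤ ρ →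
      euclNorm ((Φ + Δ) *ᵥ g - y) ≤ euclNorm (Φ *ᵥ g - y) + ρ * euclNorm (R⁻¹ *ᵥ g) := by
    intro g Δ hΔ
    have hsplit : (Φ + Δ) *ᵥ g - y = (Φ *ᵥ g - y) + (Δ * R) *ᵥ (R⁻¹ *ᵥ g) := by
      rw [mulVec_mulVec, Matrix.mul_assoc, Matrix.mul_nonsing_inv R hR, Matrix.mul_one, add_mulVec]
      abel
    rw [hsplit]
    refine le_trans (euclNorm_add_le _ _) ?_
    have h2 : euclNorm ((Δ * R) *ᵥ (R⁻¹ *ᵥ g)) ≤ ρ * euclNorm (R⁻¹ *ᵥ g) :=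
      le_trans (euclNorm_mulVec_le _ _)
        (mul_le_mul_of_nonneg_right hΔ (euclNorm_nonneg _))
    linarith
  -- conclusion
  refine ⟨ρ, hρpos, fun g => ?_⟩
  have hbdd : BddAbove ((fun Δ => euclNorm ((Φ + Δ) *ᵥ g - y)) ''
      {Δ : Matrix (Fin m) (Fin n) ℝ | frobNorm (Δ * R) ≤ ρ}) := by
    refine ⟨euclNorm (Φ *ᵥ g - y) + ρ * euclNorm (R⁻¹ *ᵥ g), ?_⟩
    rintro x ⟨Δ, hΔ, rfl⟩
    exact hup g Δ hΔ
  have hmem : Δ₀ ∈ {Δ : Matrix (Fin m) (Fin n) ℝ | frobNorm (Δ * R) ≤ ρ} :=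
    le_of_eq hΔ₀frob
  apply csSup_le
  · refine ⟨euclNorm ((Φ + 0) *ᵥ gReg - y), 0, ?_, rfl⟩
    show frobNorm ((0 : Matrix (Fin m) (Fin n) ℝ) * R) ≤ ρ
    rw [Matrix.zero_mul]
    have : frobNorm (0 : Matrix (Fin m) (Fin n) ℝ) = 0 := by
      simp [frobNorm]
    rw [this]; exact hρpos.le
  · rintro x ⟨Δ, hΔ, rfl⟩
    calc euclNorm ((Φ + Δ) *ᵥ gReg - y)
        ≤ euclNorm (Φ *ᵥ gReg - y) + ρ * euclNorm (R⁻¹ *ᵥ gReg) := hup gReg Δ hΔ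
      _ = nr + ρ * ns := by rw [hnrdef, hnsdef, hrdef, hsdef]
      _ ≤ euclNorm ((Φ + Δ₀) *ᵥ g - y) := hlow g
      _ ≤ sSup ((fun Δ => euclNorm ((Φ + Δ) *ᵥ g - y)) ''
            {Δ : Matrix (Fin m) (Fin n) ℝ | frobNorm (Δ * R) ≤ ρ}) :=
          le_csSup hbdd ⟨Δ₀, hmem, rfl⟩
end

section
/- Let n, m be positive integers, let ρ > 0, let a ∈ ℝⁿ with a ≠ 0, let b ∈ ℝᵐ with b ≠ 0, and let R be an invertible n×n real matrix. If Δ ∈ ℝ^{m×n} satisfies ‖ΔR‖_F ≤ ρ and ‖Δa + b‖ = ‖b‖ + ρ‖R⁻¹a‖, then Δ = (ρ / (‖b‖ · ‖R⁻¹a‖)) · b (R⁻¹a)ᵀ R⁻¹. In particular, the maximizer of ‖Δa + b‖ over {Δ : ‖ΔR‖_F ≤ ρ} is unique. -/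
open Matrix
open scoped BigOperators

set_option maxHeartbeats 1600000

lemma sum_sq_pos_of_ne_zero {k : ℕ} (v : Fin k → ℝ) (hv : v ≠ 0) :
    0 < ∑ i, (v i) ^ 2 := by
  rcases Function.ne_iff.1 hv with ⟨i, hi⟩
  have : (0 : ℝ) < (v i) ^ 2 := pow_two_pos_of_ne_zero hi
  calc (0:ℝ) < (v i)^2 := this
    _ ≤ ∑ i, (v i)^2 :=
      Finset.single_le_sum (fun j _ => sq_nonneg (v j)) (Finset.mem_univ i)

/-- Uniqueness of the maximizer in Lemma 2 (case b ≠ 0): any Δ in the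
uncertainty set attaining the value ‖b‖ + ρ‖R⁻¹a‖ must be the rank-one matrix
(ρ/(‖b‖‖R⁻¹a‖)) b (R⁻¹a)ᵀ R⁻¹. -/
theorem robust_inner_problem_unique_maximizer
    (n m : ℕ) (hn : 0 < n) (hm : 0 < m)
    (ρ : ℝ) (hρ : 0 < ρ)
    (a : Fin n → ℝ) (ha : a ≠ 0) (b : Fin m → ℝ) (hb : b ≠ 0)
    (R : Matrix (Fin n) (Fin n) ℝ) (hR : IsUnit R.det)
    (Δ : Matrix (Fin m) (Fin n) ℝ)
    (hΔ : frobNorm (Δ * R) ≤ ρ)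
    (hmax : euclNorm (Δ *ᵥ a + b) = euclNorm b + ρ * euclNorm (R⁻¹ *ᵥ a)) :
    Δ = (ρ / (euclNorm b * euclNorm (R⁻¹ *ᵥ a))) •
      (vecMulVec b (R⁻¹ *ᵥ a) * R⁻¹) := by
  set y : Fin n → ℝ := R⁻¹ *ᵥ a with hy
  set B : Matrix (Fin m) (Fin n) ℝ := Δ * R with hB
  have hRy : R *ᵥ y = a := by
    rw [hy, mulVec_mulVec, Matrix.mul_nonsing_inv R hR, one_mulVec]
  have hBy : B *ᵥ y = Δ *ᵥ a := by
    rw [hB, ← mulVec_mulVec, hRy]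
  have hy0 : y ≠ 0 := by
    intro h
    exact ha (by rw [← hRy, h, mulVec_zero])
  set Y : ℝ := ∑ j, (y j) ^ 2 with hYdef
  set Bb : ℝ := ∑ i, (b i) ^ 2 with hBbdef
  have hYpos : 0 < Y := sum_sq_pos_of_ne_zero y hy0
  have hBbpos : 0 < Bb := sum_sq_pos_of_ne_zero b hb
  set ny : ℝ := euclNorm y with hnydef
  set nb : ℝ := euclNorm b with hnbdef
  have hnypos : 0 < ny := Real.sqrt_pos.2 hYpos
  have hnbpos : 0 < nb := Real.sqrt_pos.2 hBbpos
  have hny2 : ny ^ 2 = Y := Real.sq_sqrt hYpos.le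
  have hnb2 : nb ^ 2 = Bb := Real.sq_sqrt hBbpos.le
  set F2 : ℝ := ∑ i, ∑ j, (B i j) ^ 2 with hF2def
  have hF2nonneg : 0 ≤ F2 :=
    Finset.sum_nonneg fun i _ => Finset.sum_nonneg fun j _ => sq_nonneg _
  have hF2 : F2 ≤ ρ ^ 2 := by
    have h1 : Real.sqrt F2 ≤ ρ := hΔ
    nlinarith [Real.sq_sqrt hF2nonneg, Real.sqrt_nonneg F2]
  set S : ℝ := ∑ i, ((B *ᵥ y) i) ^ 2 with hSdef
  have hSnonneg : 0 ≤ S := Finset.sum_nonneg fun i _ => sq_nonneg _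
  have hS : S ≤ F2 * Y := by
    rw [hF2def, Finset.sum_mul]
    apply Finset.sum_le_sum
    intro i _
    have h := Finset.sum_mul_sq_le_sq_mul_sq Finset.univ (fun j => B i j) y
    simpa [mulVec, dotProduct] using h
  set P : ℝ := ∑ i, b i * (B *ᵥ y) i with hPdef
  set t : ℝ := Real.sqrt S with htdef
  have ht2 : t ^ 2 = S := Real.sq_sqrt hSnonneg
  have htnonneg : 0 ≤ t := Real.sqrt_nonneg S
  have hPle : P ≤ nb * t := by
    have h := Real.sum_mul_le_sqrt_mul_sqrt Finset.univ b (fun i => (B *ᵥ y) i)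
    simpa [hPdef, hnbdef, euclNorm, htdef, hSdef] using h
  have htle : t ≤ ρ * ny := by
    have h1 : S ≤ (ρ * ny) ^ 2 := by nlinarith
    calc t = Real.sqrt S := htdef
      _ ≤ Real.sqrt ((ρ * ny) ^ 2) := Real.sqrt_le_sqrt h1
      _ = ρ * ny := Real.sqrt_sq (mul_pos hρ hnypos).le
  -- expand hmax
  have hexp : S + 2 * P + Bb = (nb + ρ * ny) ^ 2 := by
    have h0 : (0:ℝ) ≤ ∑ i, ((Δ *ᵥ a + b) i) ^ 2 :=
      Finset.sum_nonneg fun i _ => sq_nonneg _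
    have h1 : (∑ i, ((Δ *ᵥ a + b) i) ^ 2) = (nb + ρ * ny) ^ 2 := by
      have := hmax
      rw [euclNorm] at this
      nlinarith [Real.sq_sqrt h0, Real.sqrt_nonneg (∑ i, ((Δ *ᵥ a + b) i) ^ 2),
        mul_pos hρ hnypos]
    have h2 : (∑ i, ((Δ *ᵥ a + b) i) ^ 2) = S + 2 * P + Bb := by
      rw [hSdef, hPdef, hBbdef, ← hBy]
      rw [Finset.mul_sum, ← Finset.sum_add_distrib, ← Finset.sum_add_distrib]
      apply Finset.sum_congr rfl
      intro i _
      simp only [Pi.add_apply]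
      ring
    rw [← h1, h2]
  have heq : S + 2 * P = ρ ^ 2 * Y + 2 * ρ * nb * ny := by nlinarith
  have ht : t = ρ * ny := by nlinarith [mul_pos hρ hnypos]
  have hP : P = ρ * ny * nb := by nlinarith
  -- Frobenius argument: B = c • b yᵀ
  set c : ℝ := ρ / (nb * ny) with hcdef
  have hcP : c * P = ρ ^ 2 := by
    rw [hcdef, hP]; field_simp
  have hcBY : c ^ 2 * (Bb * Y) = ρ ^ 2 := by
    rw [hcdef, ← hnb2, ← hny2]; field_simp
  have hsumP : ∑ i, ∑ j, B i j * (b i * y j) = P := by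
    rw [hPdef]
    apply Finset.sum_congr rfl
    intro i _
    rw [mulVec, dotProduct, Finset.mul_sum]
    apply Finset.sum_congr rfl
    intro j _
    ring
  have hBbY : (∑ i, ∑ j, (b i * y j) ^ 2) = Bb * Y := by
    rw [hBbdef, hYdef, Finset.sum_mul]
    apply Finset.sum_congr rfl
    intro i _
    rw [Finset.mul_sum]
    apply Finset.sum_congr rfl
    intro j _
    ring
  have hzero : ∑ i, ∑ j, (B i j - c * (b i * y j)) ^ 2 = 0 := by
    have hexpand : ∑ i, ∑ j, (B i j - c * (b i * y j)) ^ 2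
        = F2 - 2 * c * (∑ i, ∑ j, B i j * (b i * y j))
          + c ^ 2 * (∑ i, ∑ j, (b i * y j) ^ 2) := by
      rw [hF2def, Finset.mul_sum, Finset.mul_sum, ← Finset.sum_sub_distrib,
        ← Finset.sum_add_distrib]
      apply Finset.sum_congr rfl
      intro i _
      rw [Finset.mul_sum, Finset.mul_sum, ← Finset.sum_sub_distrib,
        ← Finset.sum_add_distrib]
      apply Finset.sum_congr rfl
      intro j _
      ring
    have hnonneg : (0:ℝ) ≤ ∑ i, ∑ j, (B i j - c * (b i * y j)) ^ 2 :=
      Finset.sum_nonneg fun i _ => Finset.sum_nonneg fun j _ => sq_nonneg _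
    have hle : ∑ i, ∑ j, (B i j - c * (b i * y j)) ^ 2 ≤ 0 := by
      rw [hexpand, hsumP, hBbY]
      nlinarith
    linarith
  have hentry : ∀ i j, B i j = c * (b i * y j) := by
    intro i j
    have h1 : ∀ i ∈ Finset.univ, (0:ℝ) ≤ ∑ j, (B i j - c * (b i * y j)) ^ 2 := by
      intro i _; exact Finset.sum_nonneg fun j _ => sq_nonneg _
    have h2 := (Finset.sum_eq_zero_iff_of_nonneg h1).1 hzero i (Finset.mem_univ i)
    have h3 : ∀ j ∈ Finset.univ, (0:ℝ) ≤ (B i j - c * (b i * y j)) ^ 2 := by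
      intro j _; exact sq_nonneg _
    have h4 := (Finset.sum_eq_zero_iff_of_nonneg h3).1 h2 j (Finset.mem_univ j)
    have h5 : B i j - c * (b i * y j) = 0 := by
      exact pow_eq_zero_iff (two_ne_zero) |>.1 h4
    linarith
  have hBeq : B = c • vecMulVec b y := by
    ext i j
    simp only [Matrix.smul_apply, vecMulVec_apply, smul_eq_mul]
    rw [hentry i j]
  have hΔeq : Δ = B * R⁻¹ := by
    rw [hB, Matrix.mul_assoc, Matrix.mul_nonsing_inv R hR, Matrix.mul_one]
  rw [hΔeq, hBeq, Matrix.smul_mul]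
end

section
/- Let n, m be positive integers, let K be an n×n real symmetric positive-definite matrix, let R be an invertible n×n real matrix with R Rᵀ = K, let Φ be an m×n real matrix, let y ∈ ℝᵐ, and let ρ > 0. Suppose g* ∈ ℝⁿ is a global minimizer of the convex function g ↦ ‖Φg − y‖ + ρ‖R⁻¹g‖, and assume g* ≠ 0 and Φg* ≠ y. Then, with μ := ρ‖y − Φg*‖ / ‖R⁻¹g*‖, the optimality condition ΦᵀΦ g* + μ K⁻¹ g* = Φᵀ y holds; equivalently, g* = (ΦᵀΦ + μK⁻¹)⁻¹ Φᵀ y. -/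
open Matrix
open scoped BigOperators

lemma euclNorm_sub_comm {k : ℕ} (a b : Fin k → ℝ) : euclNorm (a - b) = euclNorm (b - a) := by
  unfold euclNorm
  congr 1
  exact Finset.sum_congr rfl fun i _ => by simp [Pi.sub_apply]; ring

lemma hasDerivAt_euclNorm_line {k : ℕ} (a b : Fin k → ℝ) (ha : a ≠ 0) :
    HasDerivAt (fun t : ℝ => euclNorm (a + t • b)) ((∑ i, a i * b i) / euclNorm a) 0 := by
  have hsum : 0 < ∑ i, (a i) ^ 2 := by
    obtain ⟨i, hi⟩ := Function.ne_iff.mp ha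
    exact Finset.sum_pos' (fun j _ => sq_nonneg _)
      ⟨i, Finset.mem_univ i, (sq_nonneg _).lt_of_ne (Ne.symm (pow_ne_zero 2 hi))⟩
  have h1 : HasDerivAt (fun t : ℝ => ∑ i, (a i + t * b i) ^ 2)
      (∑ i, 2 * a i * b i) 0 := by
    apply HasDerivAt.fun_sum
    intro i _
    have hlin : HasDerivAt (fun t : ℝ => a i + t * b i) (b i) 0 := by
      simpa using ((hasDerivAt_id (0 : ℝ)).mul_const (b i)).const_add (a i)
    have := hlin.fun_pow 2
    simpa [mul_comm, mul_assoc, mul_left_comm] using this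
  have hfx : (∑ i, (a i + (0:ℝ) * b i) ^ 2) ≠ 0 := by
    simpa using hsum.ne'
  have h2 := h1.sqrt hfx
  have heq : (fun t : ℝ => euclNorm (a + t • b)) =
      fun t : ℝ => Real.sqrt (∑ i, (a i + t * b i) ^ 2) := by
    funext t
    simp [euclNorm]
  rw [heq]
  convert h2 using 1
  have h2s : (∑ i, 2 * a i * b i) = 2 * ∑ i, a i * b i := by
    rw [Finset.mul_sum]; exact Finset.sum_congr rfl fun i _ => by ring
  have hA : euclNorm a = Real.sqrt (∑ i, (a i + (0:ℝ) * b i) ^ 2) := by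
    simp [euclNorm]
  rw [← hA, h2s]
  have hnorm : euclNorm a ≠ 0 := (euclNorm_pos ha).ne'
  field_simp

/-- Stationarity characterization from the proof of Theorem 1: a minimizer g*
of g ↦ ‖Φg − y‖ + ρ‖R⁻¹g‖ with g* ≠ 0 and Φg* ≠ y satisfies
ΦᵀΦg* + μK⁻¹g* = Φᵀy with μ = ρ‖y − Φg*‖/‖R⁻¹g*‖; equivalently
g* = (ΦᵀΦ + μK⁻¹)⁻¹Φᵀy. -/
theorem robust_minimizer_is_regularized_estimate
    (n m : ℕ) (hn : 0 < n) (hm : 0 < m)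
    (K R : Matrix (Fin n) (Fin n) ℝ) (hK : K.PosDef)
    (hR : IsUnit R.det) (hRK : R * Rᵀ = K)
    (Φ : Matrix (Fin m) (Fin n) ℝ) (y : Fin m → ℝ)
    (ρ : ℝ) (hρ : 0 < ρ)
    (gstar : Fin n → ℝ)
    (hmin : ∀ g : Fin n → ℝ,
      euclNorm (Φ *ᵥ gstar - y) + ρ * euclNorm (R⁻¹ *ᵥ gstar) ≤
        euclNorm (Φ *ᵥ g - y) + ρ * euclNorm (R⁻¹ *ᵥ g))
    (hg0 : gstar ≠ 0) (hgy : Φ *ᵥ gstar ≠ y)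
    (μ : ℝ)
    (hμ : μ = ρ * euclNorm (y - Φ *ᵥ gstar) / euclNorm (R⁻¹ *ᵥ gstar)) :
    (Φᵀ * Φ) *ᵥ gstar + μ • (K⁻¹ *ᵥ gstar) = Φᵀ *ᵥ y ∧
      gstar = (Φᵀ * Φ + μ • K⁻¹)⁻¹ *ᵥ (Φᵀ *ᵥ y) := by
  -- notation
  set a1 : Fin m → ℝ := Φ *ᵥ gstar - y with ha1def
  set a2 : Fin n → ℝ := R⁻¹ *ᵥ gstar with ha2def
  have ha1 : a1 ≠ 0 := sub_ne_zero.mpr hgy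
  have ha2 : a2 ≠ 0 := by
    intro h
    apply hg0
    have : R *ᵥ (R⁻¹ *ᵥ gstar) = gstar := by
      rw [mulVec_mulVec, Matrix.mul_nonsing_inv R hR, one_mulVec]
    rw [← this, ← ha2def, h, mulVec_zero]
  have hN1 : 0 < euclNorm a1 := euclNorm_pos ha1
  have hN2 : 0 < euclNorm a2 := euclNorm_pos ha2
  have hμ' : μ = ρ * euclNorm a1 / euclNorm a2 := by
    rw [hμ, euclNorm_sub_comm y (Φ *ᵥ gstar)]
  have hμpos : 0 < μ := by
    rw [hμ']
    positivity
  -- directional derivative is zero in every direction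
  have hdir : ∀ v : Fin n → ℝ,
      (∑ i, a1 i * (Φ *ᵥ v) i) / euclNorm a1
        + ρ * ((∑ i, a2 i * (R⁻¹ *ᵥ v) i) / euclNorm a2) = 0 := by
    intro v
    set b1 : Fin m → ℝ := Φ *ᵥ v
    set b2 : Fin n → ℝ := R⁻¹ *ᵥ v
    have hfun : (fun t : ℝ => euclNorm (Φ *ᵥ (gstar + t • v) - y)
        + ρ * euclNorm (R⁻¹ *ᵥ (gstar + t • v)))
        = fun t : ℝ => euclNorm (a1 + t • b1) + ρ * euclNorm (a2 + t • b2) := by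
      funext t
      have e1 : Φ *ᵥ (gstar + t • v) - y = a1 + t • b1 := by
        rw [mulVec_add, mulVec_smul, ha1def]
        abel
      have e2 : R⁻¹ *ᵥ (gstar + t • v) = a2 + t • b2 := by
        rw [mulVec_add, mulVec_smul]
      rw [e1, e2]
    have hderiv : HasDerivAt
        (fun t : ℝ => euclNorm (Φ *ᵥ (gstar + t • v) - y)
          + ρ * euclNorm (R⁻¹ *ᵥ (gstar + t • v)))
        ((∑ i, a1 i * b1 i) / euclNorm a1
          + ρ * ((∑ i, a2 i * b2 i) / euclNorm a2)) 0 := by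
      rw [hfun]
      exact (hasDerivAt_euclNorm_line a1 b1 ha1).add
        ((hasDerivAt_euclNorm_line a2 b2 ha2).const_mul ρ)
    have hloc : IsLocalMin
        (fun t : ℝ => euclNorm (Φ *ᵥ (gstar + t • v) - y)
          + ρ * euclNorm (R⁻¹ *ᵥ (gstar + t • v))) 0 := by
      apply Filter.Eventually.of_forall
      intro t
      simpa using hmin (gstar + t • v)
    exact hloc.hasDerivAt_eq_zero hderiv
  -- turn into vector equation
  have hKinv : (R⁻¹)ᵀ * R⁻¹ = K⁻¹ := by
    rw [← hRK, Matrix.mul_inv_rev, Matrix.transpose_nonsing_inv]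
  have hvec : ∀ v : Fin n → ℝ,
      (Φᵀ *ᵥ a1 + μ • (K⁻¹ *ᵥ gstar)) ⬝ᵥ v = 0 := by
    intro v
    have h := hdir v
    have hsum1 : (∑ i, a1 i * (Φ *ᵥ v) i) = (Φᵀ *ᵥ a1) ⬝ᵥ v := by
      rw [mulVec_transpose, ← Matrix.dotProduct_mulVec]
      rfl
    have hsum2 : (∑ i, a2 i * (R⁻¹ *ᵥ v) i) = (K⁻¹ *ᵥ gstar) ⬝ᵥ v := by
      rw [show (∑ i, a2 i * (R⁻¹ *ᵥ v) i) = a2 ⬝ᵥ (R⁻¹ *ᵥ v) from rfl,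
        Matrix.dotProduct_mulVec, ← Matrix.mulVec_transpose, ha2def,
        mulVec_mulVec, hKinv]
    rw [hsum1, hsum2] at h
    -- multiply through by euclNorm a1
    set A : ℝ := (Φᵀ *ᵥ a1) ⬝ᵥ v with hA
    set B : ℝ := (K⁻¹ *ᵥ gstar) ⬝ᵥ v with hB
    have h2 : A + μ * B = 0 := by
      rw [hμ']
      field_simp at h ⊢
      linear_combination h
    simpa [add_dotProduct, smul_dotProduct, smul_eq_mul] using h2
  have hw : Φᵀ *ᵥ a1 + μ • (K⁻¹ *ᵥ gstar) = 0 := by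
    have := hvec (Φᵀ *ᵥ a1 + μ • (K⁻¹ *ᵥ gstar))
    exact dotProduct_self_eq_zero.mp this
  have hfirst : (Φᵀ * Φ) *ᵥ gstar + μ • (K⁻¹ *ᵥ gstar) = Φᵀ *ᵥ y := by
    have : Φᵀ *ᵥ a1 = (Φᵀ * Φ) *ᵥ gstar - Φᵀ *ᵥ y := by
      rw [ha1def, mulVec_sub, mulVec_mulVec]
    rw [this] at hw
    have := hw
    abel_nf at this ⊢
    linear_combination (norm := module) this
  refine ⟨hfirst, ?_⟩
  -- invertibility of the regularized matrix
  have hKi : (K⁻¹).PosDef := hK.inv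
  have hMpos : (Φᵀ * Φ + μ • K⁻¹).PosDef := by
    have hsemi : (Φᵀ * Φ).PosSemidef := by
      have := Matrix.posSemidef_conjTranspose_mul_self Φ
      rwa [Matrix.conjTranspose_eq_transpose_of_trivial] at this
    have hsmul : (μ • K⁻¹ : Matrix (Fin n) (Fin n) ℝ).PosDef := by
      refine ⟨?_, fun x hx => ?_⟩
      · have := hKi.isHermitian
        unfold Matrix.IsHermitian at this ⊢
        rw [Matrix.conjTranspose_smul, this]
        simp
      · exact (hKi.smul hμpos).2 hx
    exact Matrix.PosDef.posSemidef_add hsemi hsmul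
  have hdet : IsUnit (Φᵀ * Φ + μ • K⁻¹).det := hMpos.det_pos.ne'.isUnit
  have hMg : (Φᵀ * Φ + μ • K⁻¹) *ᵥ gstar = Φᵀ *ᵥ y := by
    rw [add_mulVec, Matrix.smul_mulVec]
    exact hfirst
  calc gstar = ((Φᵀ * Φ + μ • K⁻¹)⁻¹ * (Φᵀ * Φ + μ • K⁻¹)) *ᵥ gstar := by
        rw [Matrix.nonsing_inv_mul _ hdet, one_mulVec]
    _ = (Φᵀ * Φ + μ • K⁻¹)⁻¹ *ᵥ (Φᵀ *ᵥ y) := by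
        rw [← mulVec_mulVec, hMg]
end
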